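/- Let X, Y : ℤ → ℝ be homogeneous second order recurrence sequences satisfying the same recurrence, i.e. there exist p, q ∈ ℝ such that X(n) = p·X(n−1) + q·X(n−2) and Y(n) = p·Y(n−1) + q·Y(n−2) for all n ∈ ℤ. Let a, b, c, d, e, m be integers such that X(d−a)·Y(e−b) − X(e−a)·Y(d−b) ≠ 0. Then (X(d−a)·Y(e−b) − X(e−a)·Y(d−b))·X(m−c) = (X(d−c)·Y(e−b) − X(e−c)·Y(d−b))·X(m−a) + (X(d−a)·X(e−c) − X(e−a)·X(d−c))·Y(m−b). -/

import Mathlib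

lemma rec_zero (p q : ℝ) (z : ℤ → ℝ)
    (h : ∀ n : ℤ, z n = p * z (n - 1) + q * z (n - 2))
    (h0 : z 0 = 0) (h1 : z 1 = 0) : ∀ m : ℤ, z m = 0 := by
  rcases eq_or_ne q 0 with hq | hq
  · rcases eq_or_ne p 0 with hp | hp
    · intro m; rw [h m, hp, hq]; ring
    · intro m
      induction m using Int.induction_on with
      | zero => exact h0
      | succ k ih =>
          have hk := h (k + 1)
          rw [hq] at hk
          have e1 : (k : ℤ) + 1 - 1 = k := by ring
          rw [e1, ih] at hk
          rw [hk]; ring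
      | pred k ih =>
          have hk := h (-(k : ℤ))
          rw [hq] at hk
          have e1 : -(k : ℤ) - 1 = -k - 1 := by ring
          rw [ih] at hk
          have : p * z (-(k : ℤ) - 1) = 0 := by linarith [hk]
          have := mul_eq_zero.mp this
          rcases this with h' | h'
          · exact absurd h' hp
          · exact h'
  · have key : ∀ m : ℤ, z m = 0 ∧ z (m + 1) = 0 := by
      intro m
      induction m using Int.induction_on with
      | zero => exact ⟨h0, by norm_num [h1]⟩
      | succ k ih =>
          refine ⟨ih.2, ?_⟩
          have hk := h (k + 1 + 1)
          have e1 : (k : ℤ) + 1 + 1 - 1 = k + 1 := by ring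
          have e2 : (k : ℤ) + 1 + 1 - 2 = k := by ring
          rw [e1, e2, ih.1, ih.2] at hk
          rw [hk]; ring
      | pred k ih =>
          have hk := h (-(k : ℤ) + 1)
          have e1 : -(k : ℤ) + 1 - 1 = -k := by ring
          have e2 : -(k : ℤ) + 1 - 2 = -k - 1 := by ring
          rw [e1, e2, ih.1, ih.2] at hk
          have hq' : q * z (-(k : ℤ) - 1) = 0 := by linarith [hk]
          have hz' : z (-(k : ℤ) - 1) = 0 := by
            rcases mul_eq_zero.mp hq' with h' | h'
            · exact absurd h' hq
            · exact h'
          refine ⟨hz', ?_⟩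
          have e3 : -(k : ℤ) - 1 + 1 = -k := by ring
          rw [e3]; exact ih.1
    exact fun m => (key m).1

/-- Lemma 1: two homogeneous second order recurrence sequences with the same
recurrence relation. -/
theorem stmt_2 (X Y : ℤ → ℝ) (p q : ℝ)
    (hX : ∀ n : ℤ, X n = p * X (n - 1) + q * X (n - 2))
    (hY : ∀ n : ℤ, Y n = p * Y (n - 1) + q * Y (n - 2))
    (a b c d e m : ℤ)
    (hΔ : X (d - a) * Y (e - b) - X (e - a) * Y (d - b) ≠ 0) :
    (X (d - a) * Y (e - b) - X (e - a) * Y (d - b)) * X (m - c)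
      = (X (d - c) * Y (e - b) - X (e - c) * Y (d - b)) * X (m - a)
        + (X (d - a) * X (e - c) - X (e - a) * X (d - c)) * Y (m - b) := by
  set u : ℤ → ℝ := fun n => X (n - a) with hu_def
  set v : ℤ → ℝ := fun n => Y (n - b) with hv_def
  set w : ℤ → ℝ := fun n => X (n - c) with hw_def
  have hu : ∀ n : ℤ, u n = p * u (n - 1) + q * u (n - 2) := by
    intro n
    have := hX (n - a)
    simp only [hu_def]
    have e1 : n - a - 1 = n - 1 - a := by ring
    have e2 : n - a - 2 = n - 2 - a := by ring
    rw [← e1, ← e2]; exact this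
  have hv : ∀ n : ℤ, v n = p * v (n - 1) + q * v (n - 2) := by
    intro n
    have := hY (n - b)
    simp only [hv_def]
    have e1 : n - b - 1 = n - 1 - b := by ring
    have e2 : n - b - 2 = n - 2 - b := by ring
    rw [← e1, ← e2]; exact this
  have hw : ∀ n : ℤ, w n = p * w (n - 1) + q * w (n - 2) := by
    intro n
    have := hX (n - c)
    simp only [hw_def]
    have e1 : n - c - 1 = n - 1 - c := by ring
    have e2 : n - c - 2 = n - 2 - c := by ring
    rw [← e1, ← e2]; exact this
  have hΔ' : u d * v e - u e * v d ≠ 0 := hΔ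
  set W : ℝ := u 0 * v 1 - u 1 * v 0 with hW_def
  rcases eq_or_ne W 0 with hW | hW
  · -- Casoratian zero leads to Δ = 0, contradiction
    exfalso
    have h00 : ∀ n : ℤ, v 0 * u n - u 0 * v n = 0 := by
      apply rec_zero p q
      · intro n
        have h1 := hu n; have h2 := hv n
        rw [h1, h2]; ring
      · ring
      · have : v 0 * u 1 - u 0 * v 1 = -W := by rw [hW_def]; ring
        rw [this, hW]; ring
    have h11 : ∀ n : ℤ, v 1 * u n - u 1 * v n = 0 := by
      apply rec_zero p q
      · intro n
        have h1 := hu n; have h2 := hv n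
        rw [h1, h2]; ring
      · have : v 1 * u 0 - u 1 * v 0 = W := by rw [hW_def]; ring
        rw [this, hW]
      · ring
    rcases eq_or_ne (u 0) 0 with hu0 | hu0
    · rcases eq_or_ne (u 1) 0 with hu1 | hu1
      · -- u vanishes at 0,1 hence everywhere, so Δ = 0
        have huz : ∀ n : ℤ, u n = 0 := rec_zero p q u hu hu0 hu1
        apply hΔ'
        rw [huz d, huz e]; ring
      · -- v 1 * u n = u 1 * v n, u 1 ≠ 0
        apply hΔ'
        have hd := h11 d; have he := h11 e
        have : u 1 * (u d * v e - u e * v d) = 0 := by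
          linear_combination u e * hd - u d * he
        rcases mul_eq_zero.mp this with h' | h'
        · exact absurd h' hu1
        · exact h'
    · apply hΔ'
      have hd := h00 d; have he := h00 e
      have : u 0 * (u d * v e - u e * v d) = 0 := by
        linear_combination u e * hd - u d * he
      rcases mul_eq_zero.mp this with h' | h'
      · exact absurd h' hu0
      · exact h'
  · -- W ≠ 0 : express w as combination of u and v
    set s : ℝ := (w 0 * v 1 - w 1 * v 0) / W with hs_def
    set t : ℝ := (u 0 * w 1 - u 1 * w 0) / W with ht_def
    have hz : ∀ n : ℤ, w n - s * u n - t * v n = 0 := by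
      apply rec_zero p q
      · intro n
        have h1 := hu n; have h2 := hv n; have h3 := hw n
        rw [h1, h2, h3]; ring
      · have hW' : u 0 * v 1 - u 1 * v 0 ≠ 0 := hW
        rw [hs_def, ht_def, hW_def]
        rw [div_mul_eq_mul_div, div_mul_eq_mul_div, sub_sub, ← add_div, sub_eq_zero, eq_div_iff hW']
        ring
      · have hW' : u 0 * v 1 - u 1 * v 0 ≠ 0 := hW
        rw [hs_def, ht_def, hW_def]
        rw [div_mul_eq_mul_div, div_mul_eq_mul_div, sub_sub, ← add_div, sub_eq_zero, eq_div_iff hW']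
        ring
    have hwc : ∀ n : ℤ, w n = s * u n + t * v n := by
      intro n; have := hz n; linarith
    show (u d * v e - u e * v d) * w m
        = (w d * v e - w e * v d) * u m + (u d * w e - u e * w d) * v m
    rw [hwc d, hwc e, hwc m]
    ring
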